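/- arXiv:1905.04049 — 3 statements merged into one kernel-verified Lean document; each statement's English description precedes it below -/
import Mathlib

section
/- Assume μ2 > 0. Every point of the curve ℛ lies on the following branch of hyperbola: for real θ1 ≤ θ1⁻ and θ2 = Θ2⁺(θ1) or θ2 = Θ2⁻(θ1), writing x = Re θ2 and y = Im θ2, one has σ22(σ12² − σ11σ22)x² + σ12²σ22 y² − 2σ22(σ11μ2 − σ12μ1)x = μ2(σ11μ2 − 2σ12μ1). -/
/-- The complex discriminant `d(θ1)`. -/
noncomputable def discrim1C (σ11 σ12 σ22 μ1 μ2 : ℝ) (θ1 : ℂ) : ℂ :=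
  ((σ12^2 - σ11 * σ22 : ℝ) : ℂ) * θ1^2
    + 2 * ((μ2 * σ12 - μ1 * σ22 : ℝ) : ℂ) * θ1 + ((μ2^2 : ℝ) : ℂ)

/-- The branch `Θ2⁺`, defined with the principal square root. -/
noncomputable def Theta2plus (σ11 σ12 σ22 μ1 μ2 : ℝ) (θ1 : ℂ) : ℂ :=
  (-((σ12 : ℂ) * θ1 + (μ2 : ℂ))
    + (discrim1C σ11 σ12 σ22 μ1 μ2 θ1) ^ ((1 : ℂ)/2)) / (σ22 : ℂ)

/-- The branch `Θ2⁻`, defined with the principal square root. -/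
noncomputable def Theta2minus (σ11 σ12 σ22 μ1 μ2 : ℝ) (θ1 : ℂ) : ℂ :=
  (-((σ12 : ℂ) * θ1 + (μ2 : ℂ))
    - (discrim1C σ11 σ12 σ22 μ1 μ2 θ1) ^ ((1 : ℂ)/2)) / (σ22 : ℂ)

/-- The branch point `θ1⁻`. -/
noncomputable def theta1minus (σ11 σ12 σ22 μ1 μ2 : ℝ) : ℝ :=
  ((μ2 * σ12 - μ1 * σ22)
    - Real.sqrt ((μ2 * σ12 - μ1 * σ22)^2 + μ2^2 * (σ11 * σ22 - σ12^2)))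
  / (σ11 * σ22 - σ12^2)

lemma cpow_half_of_nonpos {d : ℝ} (hd : d ≤ 0) :
    ((d : ℂ)) ^ ((1 : ℂ)/2) = (Real.sqrt (-d) : ℂ) * Complex.I := by
  rcases eq_or_lt_of_le hd with h | h
  · subst h
    simp [Complex.zero_cpow (by norm_num : (1:ℂ)/2 ≠ 0)]
  · rw [Complex.cpow_def_of_ne_zero (by exact_mod_cast h.ne)]
    rw [Complex.log, Complex.arg_ofReal_of_neg h]
    have habs : ‖(d : ℂ)‖ = -d := by
      rw [Complex.norm_real, Real.norm_eq_abs, abs_of_neg h]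
    rw [habs]
    have : (↑(Real.log (-d)) + ↑Real.pi * Complex.I) * ((1:ℂ)/2)
        = (↑(Real.log (-d) / 2) : ℂ) + ↑(Real.pi / 2) * Complex.I := by
      push_cast; ring
    rw [this, Complex.exp_add, Complex.exp_mul_I]
    rw [← Complex.ofReal_cos, ← Complex.ofReal_sin, Real.cos_pi_div_two,
      Real.sin_pi_div_two, ← Complex.ofReal_exp]
    have : Real.exp (Real.log (-d) / 2) = Real.sqrt (-d) := by
      rw [Real.sqrt_eq_rpow, Real.rpow_def_of_pos (by linarith : (0:ℝ) < -d)]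
      ring_nf
    rw [this]; push_cast; ring

/-- Every point of the curve `ℛ` lies on the branch of hyperbola
`σ22(σ12² − σ11σ22)x² + σ12²σ22 y² − 2σ22(σ11μ2 − σ12μ1)x = μ2(σ11μ2 − 2σ12μ1)`. -/
theorem stmt_5 (σ11 σ12 σ22 μ1 μ2 : ℝ) (hσ11 : 0 < σ11) (hσ22 : 0 < σ22)
    (hdet : 0 < σ11 * σ22 - σ12^2) (hμ2 : 0 < μ2) :
    ∀ θ1 : ℝ, θ1 ≤ theta1minus σ11 σ12 σ22 μ1 μ2 →
      ∀ θ2 : ℂ, (θ2 = Theta2plus σ11 σ12 σ22 μ1 μ2 (θ1 : ℂ) ∨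
                 θ2 = Theta2minus σ11 σ12 σ22 μ1 μ2 (θ1 : ℂ)) →
        σ22 * (σ12^2 - σ11 * σ22) * θ2.re^2 + σ12^2 * σ22 * θ2.im^2
          - 2 * σ22 * (σ11 * μ2 - σ12 * μ1) * θ2.re
          = μ2 * (σ11 * μ2 - 2 * σ12 * μ1) := by
  intro θ1 hθ1 θ2 hθ2
  have hσ22' : (σ22 : ℝ) ≠ 0 := ne_of_gt hσ22
  have hr0 : (0:ℝ) ≤ Real.sqrt ((μ2 * σ12 - μ1 * σ22)^2 + μ2^2 * (σ11 * σ22 - σ12^2)) :=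
    Real.sqrt_nonneg _
  have hr2 : (Real.sqrt ((μ2 * σ12 - μ1 * σ22)^2 + μ2^2 * (σ11 * σ22 - σ12^2)))^2
      = (μ2 * σ12 - μ1 * σ22)^2 + μ2^2 * (σ11 * σ22 - σ12^2) :=
    Real.sq_sqrt (by nlinarith)
  set r := Real.sqrt ((μ2 * σ12 - μ1 * σ22)^2 + μ2^2 * (σ11 * σ22 - σ12^2)) with hr
  have hdle : (σ12^2 - σ11 * σ22) * θ1^2 + 2 * (μ2 * σ12 - μ1 * σ22) * θ1 + μ2^2 ≤ 0 := by
    rw [theta1minus] at hθ1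
    have h1 : θ1 * (σ11 * σ22 - σ12^2) ≤ (μ2 * σ12 - μ1 * σ22) - r := by
      calc θ1 * (σ11 * σ22 - σ12^2)
          ≤ (((μ2 * σ12 - μ1 * σ22) - r) / (σ11 * σ22 - σ12^2)) * (σ11 * σ22 - σ12^2) := by
            exact mul_le_mul_of_nonneg_right hθ1 (le_of_lt hdet)
        _ = (μ2 * σ12 - μ1 * σ22) - r := by rw [div_mul_cancel₀ _ (ne_of_gt hdet)]
    have h2 : r^2 ≤ ((μ2 * σ12 - μ1 * σ22) - θ1 * (σ11 * σ22 - σ12^2))^2 := by nlinarith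
    nlinarith [h2, hr2, hdet]
  set d : ℝ := (σ12^2 - σ11 * σ22) * θ1^2 + 2 * (μ2 * σ12 - μ1 * σ22) * θ1 + μ2^2 with hdd
  have hdC : discrim1C σ11 σ12 σ22 μ1 μ2 (θ1 : ℂ) = (d : ℂ) := by
    rw [discrim1C, hdd]; push_cast; ring
  have hs2 : (Real.sqrt (-d))^2 = -d := Real.sq_sqrt (by linarith)
  set s := Real.sqrt (-d) with hs
  have hroot : (discrim1C σ11 σ12 σ22 μ1 μ2 (θ1 : ℂ)) ^ ((1:ℂ)/2)
      = (s : ℂ) * Complex.I := by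
    rw [hdC]; exact cpow_half_of_nonpos hdle
  have hsd : s^2 = -((σ12^2 - σ11 * σ22) * θ1^2 + 2 * (μ2 * σ12 - μ1 * σ22) * θ1 + μ2^2) := by
    rw [hs2, hdd]
  rcases hθ2 with h | h
  · have hform : θ2 = ((-(σ12 * θ1 + μ2) / σ22 : ℝ) : ℂ)
        + ((s / σ22 : ℝ) : ℂ) * Complex.I := by
      rw [h, Theta2plus, hroot]
      push_cast
      field_simp
      try ring
    rw [hform]
    simp only [Complex.add_re, Complex.add_im, Complex.ofReal_re, Complex.ofReal_im,
      Complex.mul_re, Complex.mul_im, Complex.I_re, Complex.I_im]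
    field_simp
    linear_combination (σ12^2) * hsd
  · have hform : θ2 = ((-(σ12 * θ1 + μ2) / σ22 : ℝ) : ℂ)
        + ((-s / σ22 : ℝ) : ℂ) * Complex.I := by
      rw [h, Theta2minus, hroot]
      push_cast
      field_simp
      try ring
    rw [hform]
    simp only [Complex.add_re, Complex.add_im, Complex.ofReal_re, Complex.ofReal_im,
      Complex.mul_re, Complex.mul_im, Complex.I_re, Complex.I_im]
    field_simp
    linear_combination (σ12^2) * hsd
end

section
/- Assume μ1 > 0 and μ2 > 0. The function w glues the two halves of the hyperbola ℛ: for every real θ1 ≤ θ1⁻ one has w(Θ2⁺(θ1)) = w(Θ2⁻(θ1)); moreover, at the vertex of the hyperbola, w(Θ2⁺(θ1⁻)) = −1. -/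
open Complex Real

set_option maxHeartbeats 1000000

/-- The branch point `θ2⁺`. -/
noncomputable def theta2plus (σ11 σ12 σ22 μ1 μ2 : ℝ) : ℝ :=
  ((μ1 * σ12 - μ2 * σ11)
    + Real.sqrt ((μ1 * σ12 - μ2 * σ11)^2 + μ1^2 * (σ11 * σ22 - σ12^2)))
  / (σ11 * σ22 - σ12^2)

/-- The branch point `θ2⁻`. -/
noncomputable def theta2minus (σ11 σ12 σ22 μ1 μ2 : ℝ) : ℝ :=
  ((μ1 * σ12 - μ2 * σ11)
    - Real.sqrt ((μ1 * σ12 - μ2 * σ11)^2 + μ1^2 * (σ11 * σ22 - σ12^2)))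
  / (σ11 * σ22 - σ12^2)

/-- The angle `β = arccos(−σ12/√(σ11σ22))`. -/
noncomputable def betaAngle (σ11 σ12 σ22 : ℝ) : ℝ :=
  Real.arccos (-σ12 / Real.sqrt (σ11 * σ22))

/-- Generalized Chebyshev function `T_a(z)`, with principal complex powers. -/
noncomputable def chebT (a z : ℂ) : ℂ :=
  (1/2) * ((z + (z^2 - 1) ^ ((1 : ℂ)/2)) ^ a + (z - (z^2 - 1) ^ ((1 : ℂ)/2)) ^ a)

/-- The conformal gluing function `w`. -/
noncomputable def gluingW (σ11 σ12 σ22 μ1 μ2 : ℝ) (θ2 : ℂ) : ℂ :=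
  chebT ((Real.pi / betaAngle σ11 σ12 σ22 : ℝ) : ℂ)
    (-(2 * θ2 - ((theta2plus σ11 σ12 σ22 μ1 μ2 + theta2minus σ11 σ12 σ22 μ1 μ2 : ℝ) : ℂ))
      / ((theta2plus σ11 σ12 σ22 μ1 μ2 - theta2minus σ11 σ12 σ22 μ1 μ2 : ℝ) : ℂ))


lemma sq_half_cpow (c s : ℂ) (h : s^2 = c) : c ^ ((1:ℂ)/2) = s ∨ c ^ ((1:ℂ)/2) = -s := by
  have h2 : (c ^ ((1:ℂ)/2))^2 = c := by
    have := Complex.cpow_nat_inv_pow c (n := 2) (by norm_num)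
    simpa [one_div] using this
  have : (c ^ ((1:ℂ)/2) - s) * (c ^ ((1:ℂ)/2) + s) = 0 := by
    linear_combination h2 - h
  rcases mul_eq_zero.1 this with h' | h'
  · left; linear_combination h'
  · right; linear_combination h'

lemma cpow_polar (r θ a : ℝ) (hr : 0 < r) (h1 : -π < θ) (h2 : θ ≤ π) :
    ((r:ℂ) * Complex.exp (↑θ * I)) ^ (a:ℂ) = ↑(r ^ a) * Complex.exp (↑(a*θ) * I) := by
  have hv : (r:ℂ) * Complex.exp (↑θ * I) = Complex.exp (↑(Real.log r) + ↑θ * I) := by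
    rw [Complex.exp_add, ← Complex.ofReal_exp, Real.exp_log hr]
  rw [hv, Complex.cpow_def_of_ne_zero (Complex.exp_ne_zero _),
    Complex.log_exp (by simpa using h1) (by simpa using h2),
    Real.rpow_def_of_pos hr, Complex.ofReal_exp, ← Complex.exp_add]
  exact congrArg Complex.exp (by push_cast; ring)

lemma exp_pm_pi (t : ℝ) (h : t = π ∨ t = -π) : Complex.exp (↑t * I) = -1 := by
  rcases h with rfl | rfl
  · exact Complex.exp_pi_mul_I
  · push_cast
    rw [neg_mul, Complex.exp_neg, Complex.exp_pi_mul_I]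
    norm_num

lemma cheb_key (β ρ ε : ℝ) (hβ1 : 0 < β) (hβ2 : β < π) (hρ : 0 < ρ)
    (hε : ε = 1 ∨ ε = -1) :
    chebT ((π/β : ℝ):ℂ) (((ρ:ℂ) * Complex.exp (↑(ε*β) * I)
        + ((ρ:ℂ))⁻¹ * Complex.exp (↑(-(ε*β)) * I))/2)
      = -(((ρ ^ (π/β) + ρ ^ (-(π/β)) : ℝ)):ℂ)/2 := by
  have hρ0 : (ρ:ℂ) ≠ 0 := by exact_mod_cast hρ.ne'
  set v : ℂ := (ρ:ℂ) * Complex.exp (↑(ε*β) * I) with hv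
  have hv0 : v ≠ 0 := mul_ne_zero hρ0 (Complex.exp_ne_zero _)
  have hvinv : v⁻¹ = ((ρ:ℂ))⁻¹ * Complex.exp (↑(-(ε*β)) * I) := by
    rw [hv, mul_inv, ← Complex.exp_neg]
    push_cast; ring_nf
  set z : ℂ := (v + v⁻¹)/2 with hz
  have hzeq : ((ρ:ℂ) * Complex.exp (↑(ε*β) * I) + ((ρ:ℂ))⁻¹ * Complex.exp (↑(-(ε*β)) * I))/2 = z := by
    rw [hz, hvinv]
  rw [hzeq]
  have hq : z^2 - 1 = ((v - v⁻¹)/2)^2 := by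
    rw [hz]; linear_combination mul_inv_cancel₀ hv0
  have hεβ1 : -π < ε*β := by rcases hε with h|h <;> subst h <;> nlinarith [Real.pi_pos]
  have hεβ2 : ε*β ≤ π := by rcases hε with h|h <;> subst h <;> nlinarith [Real.pi_pos]
  have hεβ1' : -π < -(ε*β) := by rcases hε with h|h <;> subst h <;> nlinarith [Real.pi_pos]
  have hεβ2' : -(ε*β) ≤ π := by rcases hε with h|h <;> subst h <;> nlinarith [Real.pi_pos]
  have hβ0 : β ≠ 0 := hβ1.ne'
  have hva : v ^ ((π/β : ℝ):ℂ) = -↑(ρ ^ (π/β)) := by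
    rw [hv, cpow_polar _ _ _ hρ hεβ1 hεβ2]
    have h2 : (π/β) * (ε*β) = ε * π := by field_simp
    have hor : ε*π = π ∨ ε*π = -π := by
      rcases hε with h|h <;> subst h
      · exact Or.inl (by ring)
      · exact Or.inr (by ring)
    rw [h2, exp_pm_pi (ε*π) hor]
    ring
  have hrho : (ρ⁻¹ : ℝ) ^ (π/β) = ρ ^ (-(π/β)) := by
    rw [Real.inv_rpow hρ.le, ← Real.rpow_neg hρ.le]
  have hvia : (v⁻¹) ^ ((π/β : ℝ):ℂ) = -↑(ρ ^ (-(π/β))) := by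
    rw [hvinv]
    have h1 : ((ρ:ℂ))⁻¹ = ((ρ⁻¹ : ℝ):ℂ) := by push_cast; ring
    rw [h1, cpow_polar _ _ _ (by positivity) hεβ1' hεβ2']
    have h2 : (π/β) * -(ε*β) = -ε * π := by field_simp
    have hor : -ε*π = π ∨ -ε*π = -π := by
      rcases hε with h|h <;> subst h
      · exact Or.inr (by ring)
      · exact Or.inl (by ring)
    rw [h2, exp_pm_pi (-ε*π) hor, hrho]
    ring
  rcases sq_half_cpow (z^2-1) ((v - v⁻¹)/2) hq.symm with hs | hs
  · have e1 : z + (z^2-1) ^ ((1:ℂ)/2) = v := by rw [hs, hz]; ring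
    have e2 : z - (z^2-1) ^ ((1:ℂ)/2) = v⁻¹ := by rw [hs, hz]; ring
    rw [chebT, e1, e2, hva, hvia]
    push_cast; ring
  · have e1 : z + (z^2-1) ^ ((1:ℂ)/2) = v⁻¹ := by rw [hs, hz]; ring
    have e2 : z - (z^2-1) ^ ((1:ℂ)/2) = v := by rw [hs, hz]; ring
    rw [chebT, e1, e2, hva, hvia]
    push_cast; ring

noncomputable def rhoAux (σ11 σ12 σ22 μ1 μ2 θ1 : ℝ) : ℝ :=
  ((μ2*σ12 - μ1*σ22 - (σ11*σ22 - σ12^2)*θ1)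
    + Real.sqrt ((μ2*σ12 - μ1*σ22 - (σ11*σ22 - σ12^2)*θ1)^2
        - ((μ2*σ12 - μ1*σ22)^2 + μ2^2*(σ11*σ22 - σ12^2))))
  / Real.sqrt ((μ2*σ12 - μ1*σ22)^2 + μ2^2*(σ11*σ22 - σ12^2))

lemma main_calc (σ11 σ12 σ22 μ1 μ2 : ℝ) (hσ11 : 0 < σ11) (hσ22 : 0 < σ22)
    (hdet : 0 < σ11*σ22 - σ12^2) (hμ1 : 0 < μ1) (hμ2 : 0 < μ2) (θ1 : ℝ)
    (hθ1 : θ1 ≤ theta1minus σ11 σ12 σ22 μ1 μ2) :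
    gluingW σ11 σ12 σ22 μ1 μ2 (Theta2plus σ11 σ12 σ22 μ1 μ2 (θ1:ℂ))
      = -(((rhoAux σ11 σ12 σ22 μ1 μ2 θ1 ^ (π / betaAngle σ11 σ12 σ22)
          + rhoAux σ11 σ12 σ22 μ1 μ2 θ1 ^ (-(π / betaAngle σ11 σ12 σ22)) : ℝ)):ℂ)/2
    ∧ gluingW σ11 σ12 σ22 μ1 μ2 (Theta2minus σ11 σ12 σ22 μ1 μ2 (θ1:ℂ))
      = -(((rhoAux σ11 σ12 σ22 μ1 μ2 θ1 ^ (π / betaAngle σ11 σ12 σ22)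
          + rhoAux σ11 σ12 σ22 μ1 μ2 θ1 ^ (-(π / betaAngle σ11 σ12 σ22)) : ℝ)):ℂ)/2 := by
  have hD : (0:ℝ) < σ11*σ22 - σ12^2 := hdet
  have hD0 : (σ11*σ22 - σ12^2) ≠ 0 := ne_of_gt hD
  set β := betaAngle σ11 σ12 σ22 with hβdef
  set rho := rhoAux σ11 σ12 σ22 μ1 μ2 θ1 with hrhodef
  set s11 := Real.sqrt σ11 with hs11def
  set s22 := Real.sqrt σ22 with hs22def
  set sd := Real.sqrt (σ11*σ22 - σ12^2) with hsddef
  set sE := Real.sqrt ((μ1*σ12 - μ2*σ11)^2 + μ1^2*(σ11*σ22 - σ12^2)) with hsEdef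
  set sF := Real.sqrt ((μ2*σ12 - μ1*σ22)^2 + μ2^2*(σ11*σ22 - σ12^2)) with hsFdef
  set u := μ2*σ12 - μ1*σ22 - (σ11*σ22 - σ12^2)*θ1 with hudef
  set snd := Real.sqrt ((σ11*σ22 - σ12^2)*θ1^2 - 2*(μ2*σ12 - μ1*σ22)*θ1 - μ2^2) with hsnddef
  set g := Real.sqrt (u^2 - ((μ2*σ12 - μ1*σ22)^2 + μ2^2*(σ11*σ22 - σ12^2))) with hgdef
  clear_value g snd u sF sE sd s22 s11 rho β
  have hF : (0:ℝ) < (μ2*σ12 - μ1*σ22)^2 + μ2^2*(σ11*σ22 - σ12^2) := by positivity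
  have hE : (0:ℝ) < (μ1*σ12 - μ2*σ11)^2 + μ1^2*(σ11*σ22 - σ12^2) := by positivity
  have hs11 : s11^2 = σ11 := by rw [hs11def]; exact Real.sq_sqrt hσ11.le
  have hs22 : s22^2 = σ22 := by rw [hs22def]; exact Real.sq_sqrt hσ22.le
  have hsd2 : sd^2 = σ11*σ22 - σ12^2 := by rw [hsddef]; exact Real.sq_sqrt hD.le
  have hsE2 : sE^2 = (μ1*σ12 - μ2*σ11)^2 + μ1^2*(σ11*σ22 - σ12^2) := by
    rw [hsEdef]; exact Real.sq_sqrt hE.le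
  have hsF2 : sF^2 = (μ2*σ12 - μ1*σ22)^2 + μ2^2*(σ11*σ22 - σ12^2) := by
    rw [hsFdef]; exact Real.sq_sqrt hF.le
  have hs11pos : 0 < s11 := hs11def ▸ Real.sqrt_pos.2 hσ11
  have hs22pos : 0 < s22 := hs22def ▸ Real.sqrt_pos.2 hσ22
  have hsdpos : 0 < sd := hsddef ▸ Real.sqrt_pos.2 hD
  have hsEpos : 0 < sE := hsEdef ▸ Real.sqrt_pos.2 hE
  have hsFpos : 0 < sF := hsFdef ▸ Real.sqrt_pos.2 hF
  -- u ≥ sF > 0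
  have hu : sF ≤ u := by
    have h0 := hθ1
    unfold theta1minus at h0
    rw [← hsFdef] at h0
    have h1 : θ1 * (σ11*σ22 - σ12^2) ≤ μ2*σ12 - μ1*σ22 - sF := by
      have := (le_div_iff₀ hD).mp h0
      linarith
    rw [hudef]
    linarith
  have hupos : 0 < u := lt_of_lt_of_le hsFpos hu
  have hu2F : (μ2*σ12 - μ1*σ22)^2 + μ2^2*(σ11*σ22 - σ12^2) ≤ u^2 := by
    calc (μ2*σ12 - μ1*σ22)^2 + μ2^2*(σ11*σ22 - σ12^2) = sF^2 := hsF2.symm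
      _ ≤ u^2 := pow_le_pow_left₀ hsFpos.le hu 2
  have hnegd : 0 ≤ (σ11*σ22 - σ12^2)*θ1^2 - 2*(μ2*σ12 - μ1*σ22)*θ1 - μ2^2 := by
    have key : u^2 - ((μ2*σ12 - μ1*σ22)^2 + μ2^2*(σ11*σ22 - σ12^2))
        = (σ11*σ22 - σ12^2) * ((σ11*σ22 - σ12^2)*θ1^2 - 2*(μ2*σ12 - μ1*σ22)*θ1 - μ2^2) := by
      rw [hudef]; ring
    have h2 : 0 ≤ ((σ11*σ22 - σ12^2)*θ1^2 - 2*(μ2*σ12 - μ1*σ22)*θ1 - μ2^2) * (σ11*σ22 - σ12^2) := by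
      rw [mul_comm, ← key]; linarith [hu2F]
    exact nonneg_of_mul_nonneg_left h2 hD
  have hsnd2 : snd^2 = (σ11*σ22 - σ12^2)*θ1^2 - 2*(μ2*σ12 - μ1*σ22)*θ1 - μ2^2 := by
    rw [hsnddef]; exact Real.sq_sqrt hnegd
  have hsndnn : 0 ≤ snd := hsnddef ▸ Real.sqrt_nonneg _
  have hg2 : g^2 = u^2 - ((μ2*σ12 - μ1*σ22)^2 + μ2^2*(σ11*σ22 - σ12^2)) := by
    rw [hgdef]; exact Real.sq_sqrt (by linarith [hu2F])
  have hgnn : 0 ≤ g := hgdef ▸ Real.sqrt_nonneg _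
  have hgsd : g = sd * snd := by
    rw [hgdef, hsddef, hsnddef, ← Real.sqrt_mul hD.le]
    congr 1
    rw [hudef]; ring
  -- σ11 * F = σ22 * E and hence sF = s22*sE/s11
  have hsF_eq : sF = s22 * sE / s11 := by
    have h1 : (μ2*σ12 - μ1*σ22)^2 + μ2^2*(σ11*σ22 - σ12^2)
        = (s22 * sE / s11)^2 := by
      rw [div_pow, mul_pow, hs22, hsE2, hs11, eq_div_iff hσ11.ne']
      ring
    rw [hsFdef, h1, Real.sqrt_sq (by positivity)]
  -- rho facts
  have hrho : rho = (u + g)/sF := by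
    rw [hrhodef, hudef, hgdef, hsFdef, hudef]
    rfl
  have hrhopos : 0 < rho := by
    rw [hrho]; positivity
  have hrhoinv : rho⁻¹ = (u - g)/sF := by
    have hmul : rho * ((u - g)/sF) = 1 := by
      rw [hrho, div_mul_div_comm, div_eq_one_iff_eq (by positivity : sF*sF ≠ 0)]
      linear_combination -hg2 - hsF2
    exact inv_eq_of_mul_eq_one_right hmul
  -- beta facts
  have hσ12lt : σ12^2 < (s11*s22)^2 := by
    rw [mul_pow, hs11, hs22]; linarith [hD]
  have habs : -(s11*s22) < σ12 ∧ σ12 < s11*s22 := by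
    have h1 := Real.sqrt_lt_sqrt (sq_nonneg σ12) hσ12lt
    rw [Real.sqrt_sq_eq_abs, Real.sqrt_sq (by positivity)] at h1
    exact abs_lt.mp h1
  have hcarg : Real.sqrt (σ11*σ22) = s11*s22 := by
    rw [Real.sqrt_mul hσ11.le, ← hs11def, ← hs22def]
  have hβarccos : β = Real.arccos (-σ12/(s11*s22)) := by
    rw [hβdef]; unfold betaAngle; rw [hcarg]
  have hcle : -σ12/(s11*s22) ≤ 1 := by
    rw [div_le_one (by positivity)]; linarith [habs.1]
  have hcge : -1 ≤ -σ12/(s11*s22) := by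
    rw [le_div_iff₀ (by positivity)]; linarith [habs.2]
  have hβpos : 0 < β := by
    rw [hβarccos]
    apply Real.arccos_pos.2
    rw [div_lt_one (by positivity)]; linarith [habs.1]
  have hβlt : β < π := by
    rw [hβarccos]
    refine lt_of_le_of_ne (Real.arccos_le_pi _) ?_
    rw [Ne, Real.arccos_eq_pi, not_le, lt_div_iff₀ (by positivity)]
    linarith [habs.2]
  have hcos : Real.cos β = -σ12/(s11*s22) := by
    rw [hβarccos]; exact Real.cos_arccos hcge hcle
  have hsin : Real.sin β = sd/(s11*s22) := by
    rw [hβarccos, Real.sin_arccos]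
    have h1 : 1 - (-σ12/(s11*s22))^2 = (sd/(s11*s22))^2 := by
      rw [div_pow, div_pow, hsd2, mul_pow, hs11, hs22]
      field_simp
    rw [h1, Real.sqrt_sq (by positivity)]
  -- sum and difference of theta2pm
  have hsum : theta2plus σ11 σ12 σ22 μ1 μ2 + theta2minus σ11 σ12 σ22 μ1 μ2
      = 2*(μ1*σ12 - μ2*σ11)/(σ11*σ22 - σ12^2) := by
    unfold theta2plus theta2minus
    field_simp
    ring
  have hdiff : theta2plus σ11 σ12 σ22 μ1 μ2 - theta2minus σ11 σ12 σ22 μ1 μ2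
      = 2*sE/(σ11*σ22 - σ12^2) := by
    unfold theta2plus theta2minus
    rw [hsEdef]
    field_simp
    ring
  have hsE0 : sE ≠ 0 := hsEpos.ne'
  have hs110 : s11 ≠ 0 := hs11pos.ne'
  have hs220 : s22 ≠ 0 := hs22pos.ne'
  have hσ220 : σ22 ≠ 0 := hσ22.ne'
  -- the complex LHS in a + b I form
  have hLHS : ∀ δ : ℝ,
      -(2 * ((-((σ12:ℂ) * (θ1:ℂ) + (μ2:ℂ)) + (δ:ℂ)*(Complex.I*(snd:ℂ))) / (σ22:ℂ))
          - ((theta2plus σ11 σ12 σ22 μ1 μ2 + theta2minus σ11 σ12 σ22 μ1 μ2 : ℝ):ℂ))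
        / ((theta2plus σ11 σ12 σ22 μ1 μ2 - theta2minus σ11 σ12 σ22 μ1 μ2 : ℝ):ℂ)
      = ((-σ12*u/(σ22*sE) : ℝ):ℂ) + ((-δ*(σ11*σ22 - σ12^2)*snd/(σ22*sE) : ℝ):ℂ)*Complex.I := by
    intro δ
    rw [hsum, hdiff, hudef]
    have hσ22C : (σ22:ℂ) ≠ 0 := by exact_mod_cast hσ220
    have hsEC : (sE:ℂ) ≠ 0 := by exact_mod_cast hsE0
    have hDC : (σ11:ℂ)*(σ22:ℂ) - (σ12:ℂ)^2 ≠ 0 := by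
      have : ((σ11*σ22 - σ12^2 : ℝ):ℂ) ≠ 0 := by exact_mod_cast hD0
      push_cast at this; exact this
    have hDC2 : (σ22:ℂ)*(σ11:ℂ) - (σ12:ℂ)^2 ≠ 0 := fun h => hDC (by linear_combination h)
    push_cast
    field_simp [hσ22C, hsEC, hDC, hDC2]
    ring
  have hs11C : (s11:ℂ) ≠ 0 := by exact_mod_cast hs110
  have hs22C : (s22:ℂ) ≠ 0 := by exact_mod_cast hs220
  have hsEC' : (sE:ℂ) ≠ 0 := by exact_mod_cast hsE0
  have hsdC : (sd:ℂ) ≠ 0 := by exact_mod_cast hsdpos.ne'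
  -- the a+bI form equals the polar chebyshev input form
  have hform : ∀ δ : ℝ, δ = 1 ∨ δ = -1 →
      ((-σ12*u/(σ22*sE) : ℝ):ℂ) + ((-δ*(σ11*σ22 - σ12^2)*snd/(σ22*sE) : ℝ):ℂ)*Complex.I
      = ((rho:ℂ) * Complex.exp (((-δ*β : ℝ):ℂ) * Complex.I)
          + ((rho:ℂ))⁻¹ * Complex.exp (((-(-δ*β) : ℝ):ℂ) * Complex.I))/2 := by
    intro δ hδ
    have hre1 : -σ12*u/(σ22*sE) = (rho + rho⁻¹)/2 * Real.cos β := by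
      rw [hrhoinv, hrho, hcos, hsF_eq, ← hs22]
      field_simp
      ring
    have him1 : (σ11*σ22 - σ12^2)*snd/(σ22*sE) = (rho - rho⁻¹)/2 * Real.sin β := by
      rw [hrhoinv, hrho, hsin, hgsd, hsF_eq, ← hsd2, ← hs22]
      field_simp
      ring
    rcases hδ with rfl | rfl
    · have e1 : Complex.exp (((-(1:ℝ)*β : ℝ):ℂ) * Complex.I)
          = ((Real.cos β : ℝ):ℂ) - ((Real.sin β : ℝ):ℂ)*Complex.I := by
        rw [show (-(1:ℝ)*β) = -β by ring, Complex.exp_mul_I, Complex.ofReal_neg,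
          Complex.cos_neg, Complex.sin_neg, ← Complex.ofReal_cos, ← Complex.ofReal_sin]
        ring
      have e2 : Complex.exp (((-(-(1:ℝ)*β) : ℝ):ℂ) * Complex.I)
          = ((Real.cos β : ℝ):ℂ) + ((Real.sin β : ℝ):ℂ)*Complex.I := by
        rw [show (-(-(1:ℝ)*β)) = β by ring, Complex.exp_mul_I, ← Complex.ofReal_cos,
          ← Complex.ofReal_sin]
      rw [e1, e2, ← Complex.ofReal_inv]
      have h1 : -(1:ℝ)*(σ11*σ22 - σ12^2)*snd/(σ22*sE) = -((rho - rho⁻¹)/2 * Real.sin β) := by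
        rw [← him1]; ring
      rw [show (-σ12*u/(σ22*sE) : ℝ) = (rho + rho⁻¹)/2 * Real.cos β from hre1, h1]
      push_cast
      ring
    · have e1 : Complex.exp (((-(-1:ℝ)*β : ℝ):ℂ) * Complex.I)
          = ((Real.cos β : ℝ):ℂ) + ((Real.sin β : ℝ):ℂ)*Complex.I := by
        rw [show (-(-1:ℝ)*β) = β by ring, Complex.exp_mul_I, ← Complex.ofReal_cos,
          ← Complex.ofReal_sin]
      have e2 : Complex.exp (((-(-(-1:ℝ)*β) : ℝ):ℂ) * Complex.I)
          = ((Real.cos β : ℝ):ℂ) - ((Real.sin β : ℝ):ℂ)*Complex.I := by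
        rw [show (-(-(-1:ℝ)*β)) = -β by ring, Complex.exp_mul_I, Complex.ofReal_neg,
          Complex.cos_neg, Complex.sin_neg, ← Complex.ofReal_cos, ← Complex.ofReal_sin]
        ring
      rw [e1, e2, ← Complex.ofReal_inv]
      have h1 : -(-1:ℝ)*(σ11*σ22 - σ12^2)*snd/(σ22*sE) = (rho - rho⁻¹)/2 * Real.sin β := by
        rw [← him1]; ring
      rw [show (-σ12*u/(σ22*sE) : ℝ) = (rho + rho⁻¹)/2 * Real.cos β from hre1, h1]
      push_cast
      ring
  -- square root of the discriminant
  have hSd : discrim1C σ11 σ12 σ22 μ1 μ2 (θ1:ℂ)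
      = ((-((σ11*σ22 - σ12^2)*θ1^2 - 2*(μ2*σ12 - μ1*σ22)*θ1 - μ2^2) : ℝ):ℂ) := by
    unfold discrim1C; push_cast; ring
  have hS2 : (Complex.I*(snd:ℂ))^2 = discrim1C σ11 σ12 σ22 μ1 μ2 (θ1:ℂ) := by
    rw [hSd]
    have hc : ((snd:ℂ))^2
        = (((σ11*σ22 - σ12^2)*θ1^2 - 2*(μ2*σ12 - μ1*σ22)*θ1 - μ2^2 : ℝ):ℂ) := by
      exact_mod_cast congrArg (fun x : ℝ => (x:ℂ)) hsnd2
    rw [mul_pow, Complex.I_sq]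
    push_cast
    push_cast at hc
    linear_combination -hc
  have hQ := sq_half_cpow _ _ hS2
  have hεn : (-(1:ℝ) = 1 ∨ -(1:ℝ) = -1) := Or.inr rfl
  have hεp : (-(-1:ℝ) = 1 ∨ -(-1:ℝ) = -1) := Or.inl (by norm_num)
  constructor
  · unfold gluingW Theta2plus
    rw [← hβdef]
    rcases hQ with hS | hS
    · rw [hS, show -((σ12:ℂ)*(θ1:ℂ) + (μ2:ℂ)) + Complex.I*(snd:ℂ)
          = -((σ12:ℂ)*(θ1:ℂ) + (μ2:ℂ)) + ((1:ℝ):ℂ)*(Complex.I*(snd:ℂ)) by push_cast; ring,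
        hLHS 1, hform 1 (Or.inl rfl)]
      exact cheb_key β rho (-1) hβpos hβlt hrhopos hεn
    · rw [hS, show -((σ12:ℂ)*(θ1:ℂ) + (μ2:ℂ)) + -(Complex.I*(snd:ℂ))
          = -((σ12:ℂ)*(θ1:ℂ) + (μ2:ℂ)) + (((-1):ℝ):ℂ)*(Complex.I*(snd:ℂ)) by push_cast; ring,
        hLHS (-1), hform (-1) (Or.inr rfl)]
      exact cheb_key β rho (-(-1)) hβpos hβlt hrhopos hεp
  · unfold gluingW Theta2minus
    rw [← hβdef]
    rcases hQ with hS | hS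
    · rw [hS, show -((σ12:ℂ)*(θ1:ℂ) + (μ2:ℂ)) - Complex.I*(snd:ℂ)
          = -((σ12:ℂ)*(θ1:ℂ) + (μ2:ℂ)) + (((-1):ℝ):ℂ)*(Complex.I*(snd:ℂ)) by push_cast; ring,
        hLHS (-1), hform (-1) (Or.inr rfl)]
      exact cheb_key β rho (-(-1)) hβpos hβlt hrhopos hεp
    · rw [hS, show -((σ12:ℂ)*(θ1:ℂ) + (μ2:ℂ)) - -(Complex.I*(snd:ℂ))
          = -((σ12:ℂ)*(θ1:ℂ) + (μ2:ℂ)) + ((1:ℝ):ℂ)*(Complex.I*(snd:ℂ)) by push_cast; ring,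
        hLHS 1, hform 1 (Or.inl rfl)]
      exact cheb_key β rho (-1) hβpos hβlt hrhopos hεn

lemma rho_vertex (σ11 σ12 σ22 μ1 μ2 : ℝ) (hσ11 : 0 < σ11) (hσ22 : 0 < σ22)
    (hdet : 0 < σ11 * σ22 - σ12^2) (hμ1 : 0 < μ1) (hμ2 : 0 < μ2) :
    rhoAux σ11 σ12 σ22 μ1 μ2 (theta1minus σ11 σ12 σ22 μ1 μ2) = 1 := by
  have hD0 : (σ11*σ22 - σ12^2) ≠ 0 := ne_of_gt hdet
  have hF : (0:ℝ) < (μ2*σ12 - μ1*σ22)^2 + μ2^2*(σ11*σ22 - σ12^2) := by positivity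
  have hsF : 0 < Real.sqrt ((μ2*σ12 - μ1*σ22)^2 + μ2^2*(σ11*σ22 - σ12^2)) :=
    Real.sqrt_pos.2 hF
  unfold rhoAux theta1minus
  have hu : μ2*σ12 - μ1*σ22 - (σ11*σ22 - σ12^2)*(((μ2 * σ12 - μ1 * σ22)
        - Real.sqrt ((μ2 * σ12 - μ1 * σ22)^2 + μ2^2 * (σ11 * σ22 - σ12^2)))/(σ11 * σ22 - σ12^2))
      = Real.sqrt ((μ2*σ12 - μ1*σ22)^2 + μ2^2*(σ11*σ22 - σ12^2)) := by
    have e : ∀ D x : ℝ, D ≠ 0 → D * (x / D) = x := fun D x h => by field_simp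
    rw [e _ _ hD0]; ring
  rw [hu, Real.sq_sqrt hF.le, sub_self, Real.sqrt_zero, add_zero, div_self hsF.ne']

/-- `w` glues the two halves of the hyperbola `ℛ`, and takes value `−1` at its vertex. -/
theorem stmt_10 (σ11 σ12 σ22 μ1 μ2 : ℝ) (hσ11 : 0 < σ11) (hσ22 : 0 < σ22)
    (hdet : 0 < σ11 * σ22 - σ12^2) (hμ1 : 0 < μ1) (hμ2 : 0 < μ2) :
    (∀ θ1 : ℝ, θ1 ≤ theta1minus σ11 σ12 σ22 μ1 μ2 →
      gluingW σ11 σ12 σ22 μ1 μ2 (Theta2plus σ11 σ12 σ22 μ1 μ2 (θ1 : ℂ))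
        = gluingW σ11 σ12 σ22 μ1 μ2 (Theta2minus σ11 σ12 σ22 μ1 μ2 (θ1 : ℂ))) ∧
    gluingW σ11 σ12 σ22 μ1 μ2
      (Theta2plus σ11 σ12 σ22 μ1 μ2 ((theta1minus σ11 σ12 σ22 μ1 μ2 : ℝ) : ℂ)) = -1 := by
  constructor
  · intro θ1 hθ1
    obtain ⟨h1, h2⟩ := main_calc σ11 σ12 σ22 μ1 μ2 hσ11 hσ22 hdet hμ1 hμ2 θ1 hθ1
    rw [h1, h2]
  · obtain ⟨h1, -⟩ := main_calc σ11 σ12 σ22 μ1 μ2 hσ11 hσ22 hdet hμ1 hμ2 _ le_rfl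
    rw [h1, rho_vertex σ11 σ12 σ22 μ1 μ2 hσ11 hσ22 hdet hμ1 hμ2]
    simp [Real.one_rpow]
end

section
/- Assume μ1 > 0, μ2 > 0 and let r12, r21 ∈ ℝ. For every real θ1 < θ1⁻, set θ2 = Θ2⁻(θ1) ∈ ℛ; if γ1(θ1, θ2) ≠ 0 and γ2(θ1, θ2) ≠ 0, then the boundary-condition coefficient G(θ2) = [γ1(Θ1⁻(θ2), θ2) / γ2(Θ1⁻(θ2), θ2)] · [γ2(Θ1⁻(θ2), conj(θ2)) / γ1(Θ1⁻(θ2), conj(θ2))] has modulus one: |G(θ2)| = 1. -/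
/-- The complex discriminant `D(θ2)`. -/
noncomputable def discrim2C (σ11 σ12 σ22 μ1 μ2 : ℝ) (θ2 : ℂ) : ℂ :=
  ((σ12^2 - σ11 * σ22 : ℝ) : ℂ) * θ2^2
    + 2 * ((μ1 * σ12 - μ2 * σ11 : ℝ) : ℂ) * θ2 + ((μ1^2 : ℝ) : ℂ)

/-- The branch `Θ1⁻`. -/
noncomputable def Theta1minus (σ11 σ12 σ22 μ1 μ2 : ℝ) (θ2 : ℂ) : ℂ :=
  (-((σ12 : ℂ) * θ2 + (μ1 : ℂ))
    - (discrim2C σ11 σ12 σ22 μ1 μ2 θ2) ^ ((1 : ℂ)/2)) / (σ11 : ℂ)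

/-- The curve `ℛ = Θ2±((-∞, θ1⁻])`. -/
noncomputable def curveR (σ11 σ12 σ22 μ1 μ2 : ℝ) : Set ℂ :=
  {z : ℂ | ∃ t : ℝ, t ≤ theta1minus σ11 σ12 σ22 μ1 μ2 ∧
    (z = Theta2plus σ11 σ12 σ22 μ1 μ2 (t : ℂ) ∨
     z = Theta2minus σ11 σ12 σ22 μ1 μ2 (t : ℂ))}


/-- The linear form `γ1(θ1, θ2) = θ1 + r21 θ2`, with complex arguments. -/
noncomputable def gamma1C (r21 : ℝ) (θ1 θ2 : ℂ) : ℂ := θ1 + (r21 : ℂ) * θ2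

/-- The linear form `γ2(θ1, θ2) = r12 θ1 + θ2`, with complex arguments. -/
noncomputable def gamma2C (r12 : ℝ) (θ1 θ2 : ℂ) : ℂ := (r12 : ℂ) * θ1 + θ2


open Complex in
lemma cpow_half_eq {z w : ℂ} (hw : w ^ 2 = z)
    (h : 0 < w.re ∨ (w.re = 0 ∧ 0 < w.im)) : z ^ ((1:ℂ)/2) = w := by
  have hw0 : w ≠ 0 := by
    rintro rfl
    simp at h
  have hz : z ≠ 0 := by rw [← hw]; exact pow_ne_zero _ hw0
  set s := z ^ ((1:ℂ)/2) with hsdef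
  have hs2 : s ^ 2 = z := by
    rw [sq, hsdef, ← Complex.cpow_add _ _ hz]
    norm_num
  have hsexp : s = Complex.exp (((1:ℂ)/2) * Complex.log z) := by
    rw [hsdef, Complex.cpow_def_of_ne_zero hz, mul_comm]
  have him : (((1:ℂ)/2) * Complex.log z).im = z.arg / 2 := by
    simp [Complex.mul_im, Complex.log_im]
    ring
  have harg1 : -(Real.pi/2) < z.arg / 2 := by
    have := Complex.neg_pi_lt_arg z; linarith
  have harg2 : z.arg / 2 ≤ Real.pi/2 := by
    have := Complex.arg_le_pi z; linarith
  have hre : 0 ≤ s.re := by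
    rw [hsexp, Complex.exp_re, him]
    have : 0 ≤ Real.cos (z.arg / 2) :=
      Real.cos_nonneg_of_mem_Icc ⟨by linarith, harg2⟩
    positivity
  have him_pos : s.re = 0 → 0 < s.im := by
    intro h0
    have hc : Real.cos (z.arg / 2) = 0 := by
      rw [hsexp, Complex.exp_re, him] at h0
      rcases mul_eq_zero.mp h0 with h' | h'
      · exact absurd h' (Real.exp_ne_zero _)
      · exact h'
    have : z.arg / 2 = Real.pi / 2 := by
      by_contra hne
      have hlt : z.arg / 2 < Real.pi / 2 := lt_of_le_of_ne harg2 hne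
      have := Real.cos_pos_of_mem_Ioo (Set.mem_Ioo.mpr ⟨harg1, hlt⟩)
      linarith
    rw [hsexp, Complex.exp_im, him, this, Real.sin_pi_div_two]
    simpa using Real.exp_pos _
  have hcases : s = w ∨ s = -w := by
    have h0 : (s - w) * (s + w) = 0 := by linear_combination hs2 - hw
    rcases mul_eq_zero.mp h0 with h' | h'
    · left; exact sub_eq_zero.mp h'
    · right; linear_combination h'
  rcases hcases with h' | h'
  · exact h'
  · exfalso
    rcases h with hp | ⟨h0, hi⟩
    · have : s.re = -w.re := by rw [h']; simp
      linarith
    · have h1 : s.re = 0 := by rw [h']; simp [h0]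
      have h2 : s.im = -w.im := by rw [h']; simp
      have := him_pos h1
      linarith

/-- On the curve `ℛ`, the coefficient
`G(θ2) = [γ1(Θ1⁻(θ2), θ2)/γ2(Θ1⁻(θ2), θ2)]·[γ2(Θ1⁻(θ2), conj θ2)/γ1(Θ1⁻(θ2), conj θ2)]`
of the boundary condition has modulus one. -/
theorem stmt_16 (σ11 σ12 σ22 μ1 μ2 r12 r21 : ℝ) (hσ11 : 0 < σ11) (hσ22 : 0 < σ22)
    (hdet : 0 < σ11 * σ22 - σ12^2) (hμ1 : 0 < μ1) (hμ2 : 0 < μ2) :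
    ∀ θ1 : ℝ, θ1 < theta1minus σ11 σ12 σ22 μ1 μ2 →
      gamma1C r21 (θ1 : ℂ) (Theta2minus σ11 σ12 σ22 μ1 μ2 (θ1 : ℂ)) ≠ 0 →
      gamma2C r12 (θ1 : ℂ) (Theta2minus σ11 σ12 σ22 μ1 μ2 (θ1 : ℂ)) ≠ 0 →
      ‖(gamma1C r21
            (Theta1minus σ11 σ12 σ22 μ1 μ2 (Theta2minus σ11 σ12 σ22 μ1 μ2 (θ1 : ℂ)))
            (Theta2minus σ11 σ12 σ22 μ1 μ2 (θ1 : ℂ))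
          / gamma2C r12
            (Theta1minus σ11 σ12 σ22 μ1 μ2 (Theta2minus σ11 σ12 σ22 μ1 μ2 (θ1 : ℂ)))
            (Theta2minus σ11 σ12 σ22 μ1 μ2 (θ1 : ℂ)))
        * (gamma2C r12
            (Theta1minus σ11 σ12 σ22 μ1 μ2 (Theta2minus σ11 σ12 σ22 μ1 μ2 (θ1 : ℂ)))
            ((starRingEnd ℂ) (Theta2minus σ11 σ12 σ22 μ1 μ2 (θ1 : ℂ)))
          / gamma1C r21
            (Theta1minus σ11 σ12 σ22 μ1 μ2 (Theta2minus σ11 σ12 σ22 μ1 μ2 (θ1 : ℂ)))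
            ((starRingEnd ℂ) (Theta2minus σ11 σ12 σ22 μ1 μ2 (θ1 : ℂ))))‖ = 1 := by
  intro θ1 hθ1 hg1 hg2
  set det := σ11 * σ22 - σ12^2 with hdetdef
  set b := μ2 * σ12 - μ1 * σ22 with hbdef
  set s := Real.sqrt (b^2 + μ2^2 * det) with hsdef
  have hs2 : s^2 = b^2 + μ2^2 * det := Real.sq_sqrt (by positivity)
  have hs0 : 0 < s := Real.sqrt_pos.mpr (by positivity)
  rw [theta1minus] at hθ1
  have hθ1' : det * θ1 < b - s := by
    have h := (lt_div_iff₀ hdet).mp hθ1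
    linarith [h]
  have hd : det * θ1^2 - 2*b*θ1 - μ2^2 > 0 := by nlinarith [hs0.le, hs2, hθ1']
  set c := Real.sqrt (det * θ1^2 - 2*b*θ1 - μ2^2) with hcdef
  have hc2 : c^2 = det * θ1^2 - 2*b*θ1 - μ2^2 := Real.sq_sqrt hd.le
  have hc0 : 0 < c := Real.sqrt_pos.mpr hd
  have hc2' : c^2 = (σ11*σ22 - σ12^2) * θ1^2 - 2*(μ2*σ12 - μ1*σ22)*θ1 - μ2^2 := by
    rw [hc2, hdetdef, hbdef]
  have hcC : ((c:ℂ))^2 = ((σ11*σ22 - σ12^2 : ℝ):ℂ) * (θ1:ℂ)^2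
      - 2*((μ2*σ12 - μ1*σ22 : ℝ):ℂ)*(θ1:ℂ) - ((μ2^2:ℝ):ℂ) := by
    have h := congrArg (fun x : ℝ => (x:ℂ)) hc2'
    push_cast at h ⊢
    exact h
  have hu : discrim1C σ11 σ12 σ22 μ1 μ2 (θ1:ℂ) ^ ((1:ℂ)/2) = (c:ℂ) * Complex.I := by
    apply cpow_half_eq
    · rw [discrim1C]
      push_cast at hcC ⊢
      linear_combination ((c:ℂ)^2) * Complex.I_sq - hcC
    · right
      constructor <;> simp [hc0]
  set θ2 := Theta2minus σ11 σ12 σ22 μ1 μ2 (θ1:ℂ) with hθ2def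
  have hσ22C : (σ22:ℂ) ≠ 0 := by exact_mod_cast hσ22.ne'
  have hσ11C : (σ11:ℂ) ≠ 0 := by exact_mod_cast hσ11.ne'
  have hθ2 : θ2 = (-((σ12:ℂ) * θ1 + (μ2:ℂ)) - (c:ℂ) * Complex.I) / (σ22:ℂ) := by
    rw [hθ2def, Theta2minus, hu]
  -- the quadratic relation satisfied by θ2
  have hq : (σ22:ℂ) * θ2^2 + 2*((σ12:ℂ) * θ1 + (μ2:ℂ)) * θ2
      + ((σ11:ℂ) * θ1^2 + 2*(μ1:ℂ)*θ1) = 0 := by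
    rw [hθ2]
    field_simp
    push_cast at hcC
    linear_combination ((c:ℂ)^2) * Complex.I_sq - hcC
  set w2 : ℂ := -((σ11:ℂ) * θ1 + (σ12:ℂ) * θ2 + (μ1:ℂ)) with hw2def
  have hw2sq : w2^2 = discrim2C σ11 σ12 σ22 μ1 μ2 θ2 := by
    rw [discrim2C]
    push_cast
    linear_combination (σ11:ℂ) * hq
  -- real and imaginary parts of θ2
  have hθ2re : θ2.re = (-(σ12 * θ1 + μ2)) / σ22 ∧ θ2.im = (-c) / σ22 := by
    rw [hθ2]
    rw [show (-((σ12:ℂ) * θ1 + (μ2:ℂ)) - (c:ℂ) * Complex.I) / (σ22:ℂ)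
        = (((-(σ12 * θ1 + μ2)) / σ22 : ℝ) : ℂ) + (((-c) / σ22 : ℝ) : ℂ) * Complex.I by
      push_cast
      field_simp
      ring]
    constructor <;> simp
  have hw2re : 0 < w2.re := by
    have h1 : w2.re = -(σ11 * θ1 + μ1) - σ12 * ((-(σ12 * θ1 + μ2)) / σ22) := by
      rw [hw2def]
      simp [hθ2re.1]
      ring
    have h2 : σ22 * w2.re = -det * θ1 + b := by
      rw [h1, hdetdef, hbdef]; field_simp; ring
    nlinarith [hθ1', hs0]
  have hTh1 : Theta1minus σ11 σ12 σ22 μ1 μ2 θ2 = (θ1:ℂ) := by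
    rw [Theta1minus, cpow_half_eq hw2sq (Or.inl hw2re), hw2def]
    field_simp
    ring
  rw [hTh1]
  have key1 : gamma1C r21 (θ1:ℂ) ((starRingEnd ℂ) θ2)
      = (starRingEnd ℂ) (gamma1C r21 (θ1:ℂ) θ2) := by
    simp [gamma1C]
  have key2 : gamma2C r12 (θ1:ℂ) ((starRingEnd ℂ) θ2)
      = (starRingEnd ℂ) (gamma2C r12 (θ1:ℂ) θ2) := by
    simp [gamma2C]
  rw [key1, key2, norm_mul, norm_div, norm_div, Complex.norm_conj, Complex.norm_conj]
  have h1 : ‖(gamma1C r21 (θ1:ℂ) θ2)‖ ≠ 0 := by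
    simpa using hg1
  have h2 : ‖(gamma2C r12 (θ1:ℂ) θ2)‖ ≠ 0 := by
    simpa using hg2
  field_simp
end
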